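/- arXiv:2005.00196 — 8 statements merged into one kernel-verified Lean document; each statement's English description precedes it below -/
import Mathlib

section
/- Let m be a lawful monad on types, A a preorder, and α : m A → A an Eilenberg–Moore algebra. Then the relation ⊑_α on m ℕ is substitutional: for all a b : m ℕ, if a ⊑_α b then (a >>= f) ⊑_α (b >>= f) for every f : ℕ → m ℕ. -/
/-- The relation `⊑_α` on `m ℕ` induced by an algebra `α : m A → A` and a
preorder on `A`: `a ⊑_α b` iff `α (map h a) ≤ α (map h b)` for every `h : ℕ → A`. -/
def algRel {m : Type → Type} [Monad m] {A : Type} [Preorder A]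
    (α : m A → A) (a b : m ℕ) : Prop :=
  ∀ h : ℕ → A, α (h <$> a) ≤ α (h <$> b)

/-- If `α : m A → A` is an Eilenberg–Moore algebra for a lawful
monad `m` and `A` is a preorder, then `⊑_α` is substitutional. -/
theorem algRel_substitutional
    {m : Type → Type} [Monad m] [LawfulMonad m]
    {A : Type} [Preorder A] (α : m A → A)
    (hpure : ∀ a : A, α (pure a) = a)
    (hmul : ∀ t : m (m A), α (t >>= id) = α (α <$> t)) :
    ∀ a b : m ℕ, algRel α a b → ∀ f : ℕ → m ℕ, algRel α (a >>= f) (b >>= f) := by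
  intro a b hab f h
  have key : ∀ x : m ℕ, α (h <$> (x >>= f)) = α ((fun n => α (h <$> f n)) <$> x) := by
    intro x
    have h1 : h <$> (x >>= f) = ((fun n => h <$> f n) <$> x) >>= id := by
      simp [bind_map_left, map_bind]
    rw [h1, hmul, ← comp_map]
    rfl
  rw [key a, key b]
  exact hab _
end

section
/- Let m be a lawful monad on types, A a preorder, and α : m A → A a monotone Eilenberg–Moore algebra. Then the relation ⊑_α on m ℕ is compositional: for all a b : m ℕ with a ⊑_α b and all f, g : ℕ → m ℕ satisfying f n ⊑_α g n for every n, we have (a >>= f) ⊑_α (b >>= g). -/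
/-- If `α : m A → A` is a monotone Eilenberg–Moore algebra for a
lawful monad `m` and a preorder `A`, then `⊑_α` is compositional. -/
theorem algRel_compositional
    {m : Type → Type} [Monad m] [LawfulMonad m]
    {A : Type} [Preorder A] (α : m A → A)
    (hpure : ∀ a : A, α (pure a) = a)
    (hmul : ∀ t : m (m A), α (t >>= id) = α (α <$> t))
    (hmono : ∀ (X : Type) (f g : X → A), (∀ x : X, f x ≤ g x) →
      ∀ t : m X, α (f <$> t) ≤ α (g <$> t)) :
    ∀ a b : m ℕ, algRel α a b →
      ∀ f g : ℕ → m ℕ, (∀ n : ℕ, algRel α (f n) (g n)) →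
        algRel α (a >>= f) (b >>= g) := by
  intro a b hab f g hfg h
  have key : ∀ (c : m ℕ) (k : ℕ → m ℕ),
      α (h <$> (c >>= k)) = α ((fun n => α (h <$> k n)) <$> c) := by
    intro c k
    have h1 : h <$> (c >>= k) = ((fun n => h <$> k n) <$> c) >>= id := by
      simp [map_bind, bind_map_left]
    rw [h1, hmul, Functor.map_map]
  rw [key a f, key b g]
  calc α ((fun n => α (h <$> f n)) <$> a)
      ≤ α ((fun n => α (h <$> g n)) <$> a) :=
        hmono _ _ _ (fun n => hfg n h) a
    _ ≤ α ((fun n => α (h <$> g n)) <$> b) := hab _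
end

section
/- Let m be a countably generated lawful monad, E a reflexive, transitive and compositional algebraic relation on m ℕ, and c : Q → m Empty a choice function. Then the quotient map commutes with the algebra: for every t : m (m Empty), α_c (map ⟦·⟧ t) = ⟦ t >>= id ⟧. -/
/-- The embedding `ι : m Empty → m ℕ`, mapping along the unique function `Empty → ℕ`. -/
def iotaM {m : Type → Type} [Monad m] : m Empty → m ℕ :=
  fun a => (fun e : Empty => e.elim) <$> a

/-- The base relation `IU` on `m Empty` induced by an algebraic relation `E` on `m ℕ`. -/
def IU {m : Type → Type} [Monad m] (E : m ℕ → m ℕ → Prop) (a b : m Empty) : Prop :=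
  E (iotaM a) (iotaM b)

/-- The symmetrization `~` of the base relation. -/
def baseEquiv {m : Type → Type} [Monad m] (E : m ℕ → m ℕ → Prop) (a b : m Empty) : Prop :=
  IU E a b ∧ IU E b a

/-- The value space `Q`: the quotient of `m Empty` by `~`. -/
def ValueSpace (m : Type → Type) [Monad m] (E : m ℕ → m ℕ → Prop) : Type :=
  Quot (baseEquiv (m := m) E)

/-- The quotient map `⟦·⟧ : m Empty → Q`. -/
def qmk {m : Type → Type} [Monad m] (E : m ℕ → m ℕ → Prop) :
    m Empty → ValueSpace m E :=
  Quot.mk (baseEquiv E)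

/-- The algebra `α_c : m Q → Q` determined by a choice function `c : Q → m Empty`,
`α_c t = ⟦(map c t) >>= id⟧`. -/
def algC {m : Type → Type} [Monad m] (E : m ℕ → m ℕ → Prop)
    (c : ValueSpace m E → m Empty) : m (ValueSpace m E) → ValueSpace m E :=
  fun t => qmk E ((c <$> t) >>= id)

theorem baseEquiv_of_qmk_eq {m : Type → Type} [Monad m] (E : m ℕ → m ℕ → Prop)
    (hrefl : ∀ a : m ℕ, E a a)
    (htrans : ∀ a b c : m ℕ, E a b → E b c → E a c)
    {a b : m Empty} (h : qmk E a = qmk E b) : baseEquiv E a b := by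
  have h' := Quot.eqvGen_exact h
  clear h
  induction h' with
  | rel x y h => exact h
  | refl x => exact ⟨hrefl _, hrefl _⟩
  | symm x y _ ih => exact ⟨ih.2, ih.1⟩
  | trans x y z _ _ ih1 ih2 =>
      exact ⟨htrans _ _ _ ih1.1 ih2.1, htrans _ _ _ ih2.2 ih1.2⟩

/-- For a countably generated lawful monad `m`, a reflexive,
transitive, compositional algebraic relation `E`, and a choice function `c`,
the quotient map commutes with the algebra:
`α_c (map ⟦·⟧ t) = ⟦t >>= id⟧` for every `t : m (m Empty)`. -/
theorem algC_comm_qmk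
    {m : Type → Type} [Monad m] [LawfulMonad m]
    (E : m ℕ → m ℕ → Prop)
    (hgen : ∀ (X : Type) (t : m X), ∃ (k : m ℕ) (f : ℕ → X), f <$> k = t)
    (hrefl : ∀ a : m ℕ, E a a)
    (htrans : ∀ a b c : m ℕ, E a b → E b c → E a c)
    (hcomp : ∀ (a b : m ℕ) (f g : ℕ → m ℕ),
      E a b → (∀ n : ℕ, E (f n) (g n)) → E (a >>= f) (b >>= g))
    (c : ValueSpace m E → m Empty)
    (hc : ∀ S : ValueSpace m E, qmk E (c S) = S) :
    ∀ t : m (m Empty), algC E c (qmk E <$> t) = qmk E (t >>= id) := by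
  intro t
  obtain ⟨k, f, hk⟩ := hgen (m Empty) t
  subst hk
  have key : ∀ n : ℕ, baseEquiv E (c (qmk E (f n))) (f n) := fun n =>
    baseEquiv_of_qmk_eq E hrefl htrans (hc (qmk E (f n)))
  show qmk E ((c <$> (qmk E <$> (f <$> k))) >>= id) = qmk E ((f <$> k) >>= id)
  have h1 : (c <$> (qmk E <$> (f <$> k))) >>= id
      = k >>= fun n => c (qmk E (f n)) := by
    simp [Functor.map_map, bind_map_left]
  have h2 : (f <$> k) >>= id = k >>= f := by
    simp [bind_map_left]
  rw [h1, h2]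
  apply Quot.sound
  have hio : ∀ g : ℕ → m Empty,
      iotaM (k >>= g) = k >>= fun n => iotaM (g n) := by
    intro g
    simp [iotaM, map_bind]
  constructor
  · show E (iotaM (k >>= fun n => c (qmk E (f n)))) (iotaM (k >>= f))
    rw [hio, hio]
    exact hcomp _ _ _ _ (hrefl k) (fun n => (key n).1)
  · show E (iotaM (k >>= f)) (iotaM (k >>= fun n => c (qmk E (f n))))
    rw [hio, hio]
    exact hcomp _ _ _ _ (hrefl k) (fun n => (key n).2)
end

section
/- Let m be a lawful monad, E a reflexive, transitive and compositional algebraic relation on m ℕ, and c : Q → m Empty a choice function. Then for all a b : m ℕ, E a b implies a ⊑_{α_c} b, where ⊑_{α_c} is the relation on m ℕ induced by α_c and the preorder on the value space Q. -/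
/-- The preorder on the value space `Q`: `⟦a⟧ ≤ ⟦b⟧` iff `IU a b`
(well defined when `E` is transitive). -/
def Qle {m : Type → Type} [Monad m] (E : m ℕ → m ℕ → Prop)
    (S T : ValueSpace m E) : Prop :=
  ∃ a b : m Empty, qmk E a = S ∧ qmk E b = T ∧ IU E a b

/-- The relation `⊑_{α_c}` on `m ℕ` induced by the algebra `α_c` and the
preorder on the value space `Q`. -/
def algCRel {m : Type → Type} [Monad m] (E : m ℕ → m ℕ → Prop)
    (c : ValueSpace m E → m Empty) (a b : m ℕ) : Prop :=
  ∀ h : ℕ → ValueSpace m E, Qle E (algC E c (h <$> a)) (algC E c (h <$> b))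

/-- For a lawful monad `m`, a reflexive, transitive, compositional
algebraic relation `E`, and a choice function `c`, the relation `E` is contained
in the relation `⊑_{α_c}` induced by the constructed algebra. -/
theorem rel_le_algCRel
    {m : Type → Type} [Monad m] [LawfulMonad m]
    (E : m ℕ → m ℕ → Prop)
    (hrefl : ∀ a : m ℕ, E a a)
    (htrans : ∀ a b c : m ℕ, E a b → E b c → E a c)
    (hcomp : ∀ (a b : m ℕ) (f g : ℕ → m ℕ),
      E a b → (∀ n : ℕ, E (f n) (g n)) → E (a >>= f) (b >>= g))
    (c : ValueSpace m E → m Empty)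
    (hc : ∀ S : ValueSpace m E, qmk E (c S) = S) :
    ∀ a b : m ℕ, E a b → algCRel E c a b := by
  intro a b hab h
  refine ⟨(c <$> (h <$> a)) >>= id, (c <$> (h <$> b)) >>= id, rfl, rfl, ?_⟩
  unfold IU iotaM
  have key : ∀ x : m ℕ, ((fun e : Empty => (e.elim : ℕ)) <$> ((c <$> (h <$> x)) >>= id))
      = x >>= fun n => (fun e : Empty => (e.elim : ℕ)) <$> c (h n) := by
    intro x
    simp [map_bind, ← bind_pure_comp, bind_assoc]
  rw [key a, key b]
  exact hcomp a b _ _ hab (fun n => hrefl _)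
end

section
/- Let m be a lawful monad, E a reflexive, transitive, compositional and base-valued algebraic relation on m ℕ, and c : Q → m Empty a choice function. Then α_c complements E: for all a b : m ℕ, E a b holds if and only if a ⊑_{α_c} b, where ⊑_{α_c} is the relation on m ℕ induced by α_c and the preorder on the value space Q. -/
lemma iotaM_algC_eq {m : Type → Type} [Monad m] [LawfulMonad m]
    (E : m ℕ → m ℕ → Prop) (c : ValueSpace m E → m Empty)
    (a : m ℕ) (h : ℕ → ValueSpace m E) :
    iotaM ((c <$> (h <$> a)) >>= id) = a >>= fun n => iotaM (c (h n)) := by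
  simp [iotaM, map_bind, bind_map_left, Function.comp]

theorem algC_complements
    {m : Type → Type} [Monad m] [LawfulMonad m]
    (E : m ℕ → m ℕ → Prop)
    (hrefl : ∀ a : m ℕ, E a a)
    (htrans : ∀ a b c : m ℕ, E a b → E b c → E a c)
    (hcomp : ∀ (a b : m ℕ) (f g : ℕ → m ℕ),
      E a b → (∀ n : ℕ, E (f n) (g n)) → E (a >>= f) (b >>= g))
    (hbase : ∀ a b : m ℕ,
      (∀ f : ℕ → m Empty, E (a >>= fun n => iotaM (f n)) (b >>= fun n => iotaM (f n))) →
      E a b)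
    (c : ValueSpace m E → m Empty)
    (hc : ∀ S : ValueSpace m E, qmk E (c S) = S) :
    ∀ a b : m ℕ, E a b ↔ algCRel E c a b := by
  have hequiv : Equivalence (baseEquiv E) := by
    constructor
    · intro x; exact ⟨hrefl _, hrefl _⟩
    · intro x y ⟨h1, h2⟩; exact ⟨h2, h1⟩
    · intro x y z ⟨h1, h2⟩ ⟨h3, h4⟩; exact ⟨htrans _ _ _ h1 h3, htrans _ _ _ h4 h2⟩
  have hexact : ∀ x y : m Empty, qmk E x = qmk E y → baseEquiv E x y := by
    intro x y hxy
    exact hequiv.eqvGen_iff.mp (Quot.eqvGen_exact hxy)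
  intro a b
  constructor
  · intro hE h
    refine ⟨(c <$> (h <$> a)) >>= id, (c <$> (h <$> b)) >>= id, rfl, rfl, ?_⟩
    unfold IU
    rw [iotaM_algC_eq, iotaM_algC_eq]
    exact hcomp a b _ _ hE fun n => hrefl _
  · intro hR
    apply hbase
    intro f
    obtain ⟨x, y, hx, hy, hxy⟩ := hR (fun n => qmk E (f n))
    unfold algC at hx hy
    replace hx := hexact _ _ hx
    replace hy := hexact _ _ hy
    unfold IU at hxy
    have key : E (iotaM ((c <$> ((fun n => qmk E (f n)) <$> a)) >>= id))
        (iotaM ((c <$> ((fun n => qmk E (f n)) <$> b)) >>= id)) :=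
      htrans _ _ _ hx.2 (htrans _ _ _ hxy hy.1)
    rw [iotaM_algC_eq, iotaM_algC_eq] at key
    -- relate c (qmk (f n)) with f n
    have hcf : ∀ n, baseEquiv E (c (qmk E (f n))) (f n) := fun n => hexact _ _ (hc _)
    have h1 : E (a >>= fun n => iotaM (f n)) (a >>= fun n => iotaM (c (qmk E (f n)))) :=
      hcomp a a _ _ (hrefl a) fun n => (hcf n).2
    have h2 : E (b >>= fun n => iotaM (c (qmk E (f n)))) (b >>= fun n => iotaM (f n)) :=
      hcomp b b _ _ (hrefl b) fun n => (hcf n).1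
    exact htrans _ _ _ h1 (htrans _ _ _ key h2)
end

section
/- Let m be a lawful monad, A a complete lattice, and α : m A → A a monotone Eilenberg–Moore algebra. Then Γ^α is a relator for m: (1) for every type X and a : m X, a Γ^α(Eq X) a; (2) for all relations R ⊆ X × Y and S ⊆ Y × Z, if a Γ^α(R) b and b Γ^α(S) c then a Γ^α(R;S) c, where (R;S) x z iff ∃ y, R x y ∧ S y z; (3) if R ⊆ S then Γ^α(R) ⊆ Γ^α(S); (4) for all f : X → Z, g : Y → W and R ⊆ Z × W, a Γ^α({(x,y) | R (f x) (g y)}) b holds if and only if (map f a) Γ^α(R) (map g b). -/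
/-- The operation `Γ^α` on relations determined by an algebra `α : m A → A`
on a complete lattice `A`: `a Γ^α(R) b` iff for all `f : X → A`, `g : Y → A`
with `R x y → f x ≤ g y`, we have `α (map f a) ≤ α (map g b)`. -/
def GammaAlg {m : Type → Type} [Monad m] {A : Type} [CompleteLattice A]
    (α : m A → A) {X Y : Type} (R : X → Y → Prop) (a : m X) (b : m Y) : Prop :=
  ∀ (f : X → A) (g : Y → A), (∀ x y, R x y → f x ≤ g y) → α (f <$> a) ≤ α (g <$> b)

/-- If `A` is a complete lattice and `α : m A → A` is a monotone
Eilenberg–Moore algebra for a lawful monad `m`, then `Γ^α` is a relator for `m`. -/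
theorem GammaAlg_is_relator
    {m : Type → Type} [Monad m] [LawfulMonad m]
    {A : Type} [CompleteLattice A] (α : m A → A)
    (hpure : ∀ a : A, α (pure a) = a)
    (hmul : ∀ t : m (m A), α (t >>= id) = α (α <$> t))
    (hmono : ∀ (X : Type) (f g : X → A), (∀ x : X, f x ≤ g x) →
      ∀ t : m X, α (f <$> t) ≤ α (g <$> t)) :
    -- (1) `Γ^α` contains the identity: `=_{m X} ⊆ Γ^α(=_X)`
    (∀ (X : Type) (a : m X), GammaAlg α (Eq : X → X → Prop) a a) ∧
    -- (2) `Γ^α` laxly preserves composition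
    (∀ (X Y Z : Type) (R : X → Y → Prop) (S : Y → Z → Prop)
        (a : m X) (b : m Y) (c : m Z),
      GammaAlg α R a b → GammaAlg α S b c →
      GammaAlg α (fun x z => ∃ y, R x y ∧ S y z) a c) ∧
    -- (3) `Γ^α` is monotone in the relation
    (∀ (X Y : Type) (R S : X → Y → Prop), (∀ x y, R x y → S x y) →
      ∀ (a : m X) (b : m Y), GammaAlg α R a b → GammaAlg α S a b) ∧
    -- (4) `Γ^α` commutes with reindexing along functions
    (∀ (X Y Z W : Type) (f : X → Z) (g : Y → W) (R : Z → W → Prop)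
        (a : m X) (b : m Y),
      GammaAlg α (fun x y => R (f x) (g y)) a b ↔ GammaAlg α R (f <$> a) (g <$> b)) := by

  refine ⟨?_, ?_, ?_, ?_⟩
  · intro X a f g h
    exact hmono X f g (fun x => h x x rfl) a
  · intro X Y Z R S a b c hab hbc f h hfh
    set g : Y → A := fun y => ⨆ x : {x // R x y}, f x.1 with hg
    have h1 : α (f <$> a) ≤ α (g <$> b) := by
      refine hab f g fun x y hxy => ?_
      exact le_iSup (fun x : {x // R x y} => f x.1) ⟨x, hxy⟩
    have h2 : α (g <$> b) ≤ α (h <$> c) := by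
      refine hbc g h fun y z hyz => iSup_le fun ⟨x, hxy⟩ => hfh x z ⟨y, hxy, hyz⟩
    exact h1.trans h2
  · intro X Y R S hRS a b hab f g hfg
    exact hab f g fun x y hxy => hfg x y (hRS x y hxy)
  · intro X Y Z W f g R a b
    constructor
    · intro hab p q hpq
      have := hab (p ∘ f) (q ∘ g) fun x y h => hpq _ _ h
      simpa [comp_map] using this
    · intro hab p q hpq
      -- need p ≤ ... define p' on Z? Use reindexed functions
      have := hab (fun z => ⨆ x : {x // f x = z}, p x.1)
        (fun w => ⨅ y : {y // g y = w}, q y.1) ?_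
      · refine le_trans ?_ (le_trans this ?_)
        · rw [← comp_map]
          exact hmono X p _ (fun x => le_iSup (fun x' : {x' // f x' = f x} => p x'.1) ⟨x, rfl⟩) a
        · rw [← comp_map]
          exact hmono Y _ q (fun y => iInf_le (fun y' : {y' // g y' = g y} => q y'.1) ⟨y, rfl⟩) b
      · intro z w hzw
        exact iSup_le fun ⟨x, hx⟩ => le_iInf fun ⟨y, hy⟩ => hpq x y (show R (f x) (g y) by rw [hx, hy]; exact hzw)
end

section
/- Let m be a lawful monad and E a reflexive, transitive and compositional algebraic relation on m ℕ. Then E is base-valued if and only if the relation Γ^E applied to the equality relation on ℕ coincides with E, i.e., for all a b : m ℕ, E a b holds iff for all f, g : ℕ → m Empty with E (ι (f n)) (ι (g n)) for every n, E (a >>= (ι ∘ f)) (b >>= (ι ∘ g)). -/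
/-- For a lawful monad `m` and a reflexive, transitive,
compositional algebraic relation `E` on `m ℕ`, `E` is base-valued if and only
if `Γ^E` applied to the equality relation on `ℕ` coincides with `E`. -/
theorem base_valued_iff_Gamma_eq
    {m : Type → Type} [Monad m] [LawfulMonad m]
    (E : m ℕ → m ℕ → Prop)
    (hrefl : ∀ a : m ℕ, E a a)
    (htrans : ∀ a b c : m ℕ, E a b → E b c → E a c)
    (hcomp : ∀ (a b : m ℕ) (f g : ℕ → m ℕ),
      E a b → (∀ n : ℕ, E (f n) (g n)) → E (a >>= f) (b >>= g)) :
    -- `E` is base-valued ...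
    (∀ a b : m ℕ,
      (∀ f : ℕ → m Empty, E (a >>= fun n => iotaM (f n)) (b >>= fun n => iotaM (f n))) →
      E a b)
    ↔
    -- ... iff `Γ^E(=_ℕ)` coincides with `E`
    (∀ a b : m ℕ, E a b ↔
      ∀ f g : ℕ → m Empty, (∀ n : ℕ, E (iotaM (f n)) (iotaM (g n))) →
        E (a >>= fun n => iotaM (f n)) (b >>= fun n => iotaM (g n))) := by
  constructor
  · intro hbase a b
    constructor
    · intro hab f g hfg
      exact hcomp a b _ _ hab hfg
    · intro h
      exact hbase a b fun f => h f f (fun n => hrefl _)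
  · intro hG a b h
    refine (hG a b).mpr ?_
    intro f g hfg
    exact htrans _ _ _ (h f) (hcomp b b _ _ (hrefl b) hfg)
end

section
/- Let m be a lawful monad, A a complete lattice, and α : m A → A an Eilenberg–Moore algebra. Then for all l, r : m ℕ, l ⊑_O r holds if and only if for every v : A and every f : ℕ → A such that for each n either f n = ⊥ or f n = v, one has α (map f l) ≤ α (map f r). -/
/-- A Boolean predicate on a complete lattice is open if it maps limits of
monotone sequences of `false`-elements to `false`. -/
def IsOpenPred {A : Type} [CompleteLattice A] (P : A → Bool) : Prop :=
  ∀ a : ℕ → A, Monotone a → (∀ n : ℕ, P (a n) = false) → P (⨆ n, a n) = false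

/-- A Boolean predicate is monotone if it preserves the order. -/
def IsMonoPred {A : Type} [CompleteLattice A] (P : A → Bool) : Prop :=
  ∀ a b : A, a ≤ b → P a = true → P b = true

/-- `v' : Bool → A` sends `true` to `v` and `false` to `⊥`. -/
def boolVal {A : Type} [CompleteLattice A] (v : A) : Bool → A :=
  fun b => if b then v else ⊥

/-- The relation `⊑_O` on `m ℕ` determined by the Boolean modalities `(P, v)`
extracted from the algebra `α`. -/
def modalRel {m : Type → Type} [Monad m] {A : Type} [CompleteLattice A]
    (α : m A → A) (l r : m ℕ) : Prop :=
  ∀ (val : ℕ → Bool) (v : A) (P : A → Bool), IsMonoPred P → IsOpenPred P →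
    (P (α ((fun n => boolVal v (val n)) <$> l)) = true →
     P (α ((fun n => boolVal v (val n)) <$> r)) = true)

section Predicates

variable {A : Type} [CompleteLattice A]

theorem isMonoPred_not_le [DecidableLE A] (c : A) : IsMonoPred (fun x : A => decide ¬x ≤ c) := by
  intro a b hab ha
  simp only [decide_eq_true_eq] at ha ⊢
  exact fun hb => ha (hab.trans hb)

theorem isOpenPred_not_le [DecidableLE A] (c : A) : IsOpenPred (fun x : A => decide ¬x ≤ c) := by
  intro a _ ha
  simp only [decide_eq_false_iff_not, not_not] at ha ⊢
  exact iSup_le ha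

/-- Monotone open predicates determine the order: test with the complement of `Iic b`. -/
theorem le_of_forall_isMonoPred_isOpenPred {a b : A}
    (h : ∀ P : A → Bool, IsMonoPred P → IsOpenPred P → P a = true → P b = true) : a ≤ b := by
  classical
  by_contra hab
  have hb := h _ (isMonoPred_not_le b) (isOpenPred_not_le b) (decide_eq_true hab)
  exact of_decide_eq_true hb le_rfl

theorem boolVal_eq_bot_or_eq (v : A) (b : Bool) : boolVal v b = ⊥ ∨ boolVal v b = v := by
  cases b <;> simp [boolVal]

theorem boolVal_decide_eq {ι : Type*} [DecidableEq A] {v : A} {f : ι → A}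
    (hf : ∀ i, f i = ⊥ ∨ f i = v) : (fun i => boolVal v (decide (f i = v))) = f := by
  funext i
  by_cases hv : f i = v
  · simp [boolVal, hv]
  · simp only [boolVal, hv, decide_false, Bool.false_eq_true, if_false]
    exact ((hf i).resolve_right hv).symm

end Predicates

theorem modalRel_characterisation_general
    {m : Type → Type} [Monad m]
    {A : Type} [CompleteLattice A] (α : m A → A) :
    ∀ l r : m ℕ, modalRel α l r ↔
      ∀ (v : A) (f : ℕ → A), (∀ n : ℕ, f n = ⊥ ∨ f n = v) →
        α (f <$> l) ≤ α (f <$> r) := by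
  classical
  intro l r
  constructor
  · intro h v f hf
    refine le_of_forall_isMonoPred_isOpenPred fun P hmono hopen => ?_
    simpa only [boolVal_decide_eq hf] using h (fun n => decide (f n = v)) v P hmono hopen
  · intro h val v P hmono _ hl
    exact hmono _ _ (h v _ fun n => boolVal_eq_bot_or_eq v (val n)) hl

/-- For a lawful monad `m`, a complete lattice `A` and an
Eilenberg–Moore algebra `α : m A → A`, the relation `⊑_O` is characterised by
testing with functions `f : ℕ → {⊥, v}`. -/
theorem modalRel_characterisation
    {m : Type → Type} [Monad m] [LawfulMonad m]
    {A : Type} [CompleteLattice A] (α : m A → A)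
    (hpure : ∀ a : A, α (pure a) = a)
    (hmul : ∀ t : m (m A), α (t >>= id) = α (α <$> t)) :
    ∀ l r : m ℕ, modalRel α l r ↔
      ∀ (v : A) (f : ℕ → A), (∀ n : ℕ, f n = ⊥ ∨ f n = v) →
        α (f <$> l) ≤ α (f <$> r) :=
  modalRel_characterisation_general α
end
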